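/- Under the hypotheses making Z/D a right triangulated category (C right triangulated satisfying Assumption 2.10, D ⊆ Z, D factor-through-epic, Z extension-closed, Z = μ(Z;D)): if μ: M → N is a D-monic morphism with M, N ∈ Z and M →μ N →γ P →φ TM is a right triangle in C, then P ∈ Z. -/
import Mathlib


open CategoryTheory Limits

attribute [local instance] CategoryTheory.Limits.hasBinaryBiproducts_of_finite_biproducts

universe v u

variable (C : Type u) [Category.{v} C]

/-- A sextuple `A ⟶ B ⟶ C ⟶ TA` in a category with an endofunctor `T`. -/
structure RightTriangle (T : C ⥤ C) where
  obj₁ : C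
  obj₂ : C
  obj₃ : C
  mor₁ : obj₁ ⟶ obj₂
  mor₂ : obj₂ ⟶ obj₃
  mor₃ : obj₃ ⟶ T.obj obj₁

variable {C}

/-- An isomorphism of sextuples. -/
def RightTriangle.Iso {T : C ⥤ C} (t t' : RightTriangle C T) : Prop :=
  ∃ (a : t.obj₁ ≅ t'.obj₁) (b : t.obj₂ ≅ t'.obj₂) (c : t.obj₃ ≅ t'.obj₃),
    t.mor₁ ≫ b.hom = a.hom ≫ t'.mor₁ ∧
    t.mor₂ ≫ c.hom = b.hom ≫ t'.mor₂ ∧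
    t.mor₃ ≫ T.map a.hom = c.hom ≫ t'.mor₃

open ZeroObject in
/-- A right triangulated category structure on an additive category `C`
with shift endofunctor `T`, following Assem–Beligiannis–Marmaridis:
axioms TR(0)-TR(5). -/
structure RightTriangulated [Preadditive C] [HasZeroObject C] [HasFiniteBiproducts C]
    (T : C ⥤ C) where
  shift_additive : T.Additive
  dist : Set (RightTriangle C T)
  /-- TR(0): closed under isomorphisms -/
  tr0 : ∀ t ∈ dist, ∀ t', RightTriangle.Iso t t' → t' ∈ dist
  /-- TR(1): `0 ⟶ A ⟶ A ⟶ 0` is a right triangle -/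
  tr1 : ∀ A : C, (⟨0, A, A, 0, 𝟙 A, 0⟩ : RightTriangle C T) ∈ dist
  /-- TR(2): every morphism extends to a right triangle -/
  tr2 : ∀ {A B : C} (f : A ⟶ B), ∃ (Z : C) (g : B ⟶ Z) (h : Z ⟶ T.obj A),
    (⟨A, B, Z, f, g, h⟩ : RightTriangle C T) ∈ dist
  /-- TR(3): rotation -/
  tr3 : ∀ t ∈ dist,
    (⟨t.obj₂, t.obj₃, T.obj t.obj₁, t.mor₂, t.mor₃, -T.map t.mor₁⟩ : RightTriangle C T) ∈ dist
  /-- TR(4): completion of commutative squares to morphisms of right triangles -/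
  tr4 : ∀ t ∈ dist, ∀ t' ∈ dist, ∀ (a : t.obj₁ ⟶ t'.obj₁) (b : t.obj₂ ⟶ t'.obj₂),
    t.mor₁ ≫ b = a ≫ t'.mor₁ →
    ∃ c : t.obj₃ ⟶ t'.obj₃,
      t.mor₂ ≫ c = b ≫ t'.mor₂ ∧ t.mor₃ ≫ T.map a = c ≫ t'.mor₃
  /-- TR(5): the octahedral axiom -/
  tr5 : ∀ {X Y Z U V W : C} (a : X ⟶ Y) (b : Y ⟶ Z) (c : Z ⟶ T.obj X)
    (d : Y ⟶ U) (e : U ⟶ V) (f : V ⟶ T.obj Y) (g : U ⟶ W) (h : W ⟶ T.obj X),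
    (⟨X, Y, Z, a, b, c⟩ : RightTriangle C T) ∈ dist →
    (⟨Y, U, V, d, e, f⟩ : RightTriangle C T) ∈ dist →
    (⟨X, U, W, a ≫ d, g, h⟩ : RightTriangle C T) ∈ dist →
    ∃ (l : Z ⟶ W) (i : W ⟶ V),
      b ≫ l = d ≫ g ∧ l ≫ h = c ∧ g ≫ i = e ∧ i ≫ f = h ≫ T.map a ∧
      (⟨Z, W, V, l, i, f ≫ T.map b⟩ : RightTriangle C T) ∈ dist

/-- Assumption 2.10: the rotation axiom can be reversed. -/
def Assumption210 [Preadditive C] [HasZeroObject C] [HasFiniteBiproducts C]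
    {T : C ⥤ C} (rt : RightTriangulated T) : Prop :=
  ∀ {A B Z : C} (f : A ⟶ B) (g : B ⟶ Z) (h : Z ⟶ T.obj A),
    (⟨B, Z, T.obj A, g, h, -T.map f⟩ : RightTriangle C T) ∈ rt.dist →
    (⟨A, B, Z, f, g, h⟩ : RightTriangle C T) ∈ rt.dist

/-- A morphism factors through an object of `S`. -/
def FactorsThru (S : Set C) {X Y : C} (f : X ⟶ Y) : Prop :=
  ∃ (D : C) (_ : D ∈ S) (u : X ⟶ D) (v : D ⟶ Y), u ≫ v = f

/-- `g : X ⟶ Y` is `S`-epic. -/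
def SEpic (S : Set C) {X Y : C} (g : X ⟶ Y) : Prop :=
  ∀ D ∈ S, ∀ u : D ⟶ Y, ∃ v : D ⟶ X, v ≫ g = u

/-- `f : X ⟶ Y` is `S`-monic. -/
def SMonic (S : Set C) {X Y : C} (f : X ⟶ Y) : Prop :=
  ∀ D ∈ S, ∀ u : X ⟶ D, ∃ v : Y ⟶ D, f ≫ v = u

/-- iterate of an endofunctor. -/
def iterFun (T : C ⥤ C) : ℕ → (C ⥤ C)
  | 0 => 𝟭 C
  | n + 1 => iterFun T n ⋙ T

/-- `S` is factor-through-epic: every `f ∈ [Tⁿ S](TX, TY)` with `n > 0` is of the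
form `T f'` for some `f' ∈ [Tⁿ⁻¹ S](X, Y)`. -/
def FactorThroughEpic (T : C ⥤ C) (S : Set C) : Prop :=
  ∀ (n : ℕ) (X Y : C) (f : T.obj X ⟶ T.obj Y),
    FactorsThru ((iterFun T (n + 1)).obj '' S) f →
    ∃ f' : X ⟶ Y, FactorsThru ((iterFun T n).obj '' S) f' ∧ T.map f' = f

/-- A subcategory (given by a set of objects) closed under isomorphisms,
finite direct sums and direct summands. -/
def IsSubcat [Preadditive C] [HasFiniteBiproducts C] (S : Set C) : Prop :=
  (∀ {X Y : C}, (X ≅ Y) → X ∈ S → Y ∈ S) ∧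
  (∀ {X Y : C}, X ∈ S → Y ∈ S → (X ⊞ Y) ∈ S) ∧
  (∀ {X Y : C} (s : Y ⟶ X) (r : X ⟶ Y), s ≫ r = 𝟙 Y → X ∈ S → Y ∈ S)

section Mutation

variable [Preadditive C] [HasZeroObject C] [HasFiniteBiproducts C]
  {T : C ⥤ C} (rt : RightTriangulated T)

/-- `μ(𝒵; 𝒟)`: objects `X` that lie in `𝒟` or are the left end of a right triangle
`X ⟶ D ⟶ Y ⟶ TX` with `Y ∈ 𝒵`, `D ∈ 𝒟`, the first map a left `𝒟`-approximation and
the second a right `𝒟`-approximation. -/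
def muSet (𝒵 𝒟 : Set C) : Set C :=
  {X | X ∈ 𝒟 ∨ ∃ (D Y : C) (f : X ⟶ D) (g : D ⟶ Y) (h : Y ⟶ T.obj X),
    (⟨X, D, Y, f, g, h⟩ : RightTriangle C T) ∈ rt.dist ∧
    D ∈ 𝒟 ∧ Y ∈ 𝒵 ∧ SMonic 𝒟 f ∧ SEpic 𝒟 g}

/-- `μ⁻¹(𝒳; 𝒟)`: objects `Y` that lie in `𝒟` or are the third term of a right triangle
`X ⟶ D ⟶ Y ⟶ TX` with `X ∈ 𝒳`, `D ∈ 𝒟`, the maps being left/right `𝒟`-approximations. -/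
def muInvSet (𝒳 𝒟 : Set C) : Set C :=
  {Y | Y ∈ 𝒟 ∨ ∃ (X D : C) (f : X ⟶ D) (g : D ⟶ Y) (h : Y ⟶ T.obj X),
    (⟨X, D, Y, f, g, h⟩ : RightTriangle C T) ∈ rt.dist ∧
    X ∈ 𝒳 ∧ D ∈ 𝒟 ∧ SMonic 𝒟 f ∧ SEpic 𝒟 g}

/-- `(𝒳, 𝒴)` is a `𝒟`-mutation pair. -/
def IsMutationPair (𝒳 𝒴 𝒟 : Set C) : Prop :=
  muInvSet rt 𝒳 𝒟 = 𝒴 ∧ muSet rt 𝒴 𝒟 = 𝒳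

/-- `𝒵` is extension-closed. -/
def ExtClosed (𝒵 : Set C) : Prop :=
  ∀ t ∈ rt.dist, t.obj₁ ∈ 𝒵 → t.obj₃ ∈ 𝒵 → t.obj₂ ∈ 𝒵

end Mutation

section AuxLemmas

open ZeroObject

variable [Preadditive C] [HasZeroObject C] [HasFiniteBiproducts C]
  {T : C ⥤ C} (rt : RightTriangulated T)

/-- The triangle `A ⟶ A ⟶ T0` is distinguished. -/
private lemma idTriangle (A : C) :
    (⟨A, A, T.obj 0, 𝟙 A, 0, 0⟩ : RightTriangle C T) ∈ rt.dist := by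
  haveI := rt.shift_additive
  simpa using rt.tr3 _ (rt.tr1 A)

/-- Consecutive morphisms in a distinguished triangle compose to zero. -/
private lemma compZero {t : RightTriangle C T} (ht : t ∈ rt.dist) :
    t.mor₁ ≫ t.mor₂ = 0 := by
  obtain ⟨c, hc, -⟩ := rt.tr4 _ (idTriangle rt t.obj₁) _ ht (𝟙 t.obj₁) t.mor₁ (by simp)
  simpa using hc.symm

/-- Contravariant half-exactness: a map out of `obj₂` killed by `mor₁`
factors through `mor₂`. -/
private lemma bexact {t : RightTriangle C T} (ht : t ∈ rt.dist) {X : C}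
    (u : t.obj₂ ⟶ X) (hu : t.mor₁ ≫ u = 0) :
    ∃ w : t.obj₃ ⟶ X, t.mor₂ ≫ w = u := by
  obtain ⟨c, hc, -⟩ := rt.tr4 _ ht _ (rt.tr1 X) 0 u (by simp [hu])
  exact ⟨c, by simpa using hc⟩

/-- Assumption 2.10 forces the shift functor to be faithful. -/
private lemma tFaithful (h210 : Assumption210 rt) {X Y : C} (ζ : X ⟶ Y)
    (hζ : T.map ζ = 0) : ζ = 0 := by
  haveI := rt.shift_additive
  obtain ⟨Cz, p, q, htz⟩ := rt.tr2 ζ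
  have h3 : (⟨Y, Cz, T.obj X, p, q, -T.map (0 : X ⟶ Y)⟩ : RightTriangle C T) ∈ rt.dist := by
    simpa [hζ] using rt.tr3 _ htz
  have h0 := h210 0 p q h3
  obtain ⟨ω, hω⟩ := bexact rt h0 (𝟙 Y) (by simp)
  have hzp : ζ ≫ p = 0 := compZero rt htz
  calc ζ = ζ ≫ p ≫ ω := by rw [hω, Category.comp_id]
  _ = 0 := by rw [← Category.assoc, hzp, zero_comp]

/-- A version of covariant exactness: a map from an object of `𝒟` into `obj₂`
killed by `mor₂` factors through `mor₁`.  Uses `FactorThroughEpic` and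
Assumption 2.10. -/
private lemma ceD (𝒟 : Set C) (h210 : Assumption210 rt) (hfte : FactorThroughEpic T 𝒟)
    {A B C' : C} {f : A ⟶ B} {g : B ⟶ C'} {h : C' ⟶ T.obj A}
    (ht : (⟨A, B, C', f, g, h⟩ : RightTriangle C T) ∈ rt.dist)
    {D : C} (hD : D ∈ 𝒟) (v : D ⟶ B) (hv : v ≫ g = 0) :
    ∃ x : D ⟶ A, x ≫ f = v := by
  haveI := rt.shift_additive
  obtain ⟨Cv, p, q, htv⟩ := rt.tr2 v
  obtain ⟨w, hw⟩ := bexact rt htv g hv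
  obtain ⟨Cw, r, s, htw⟩ := rt.tr2 w
  have ht1 := rt.tr3 _ htv
  have ht3 : (⟨B, C', T.obj A, p ≫ w, h, -T.map f⟩ : RightTriangle C T) ∈ rt.dist := by
    rw [hw]; exact rt.tr3 _ ht
  obtain ⟨l9, i9, -, hl9, -, -, -⟩ := rt.tr5 p q (-T.map v) w r s h (-T.map f) ht1 htw ht3
  have hl9' : l9 ≫ T.map f = T.map v := by
    rw [Preadditive.comp_neg] at hl9
    exact neg_injective hl9
  obtain ⟨x, -, hx⟩ := hfte 0 D A l9 ⟨T.obj D, ⟨D, hD, rfl⟩, 𝟙 _, l9, Category.id_comp l9⟩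
  have hz : T.map (x ≫ f - v) = 0 := by
    rw [Functor.map_sub, T.map_comp, hx, hl9', sub_self]
  have := tFaithful rt h210 _ hz
  exact ⟨x, by rwa [sub_eq_zero] at this⟩

/-- Every object of `𝒵` admits full `muSet` data. -/
private lemma getData (𝒟 𝒵 : Set C) (hsub𝒵 : IsSubcat 𝒵) (h𝒟𝒵 : 𝒟 ⊆ 𝒵)
    (hmu : muSet rt 𝒵 𝒟 = 𝒵) {Z : C} (hZ : Z ∈ 𝒵) :
    ∃ (D Y : C) (f : Z ⟶ D) (g : D ⟶ Y) (h : Y ⟶ T.obj Z),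
      (⟨Z, D, Y, f, g, h⟩ : RightTriangle C T) ∈ rt.dist ∧
      D ∈ 𝒟 ∧ Y ∈ 𝒵 ∧ SMonic 𝒟 f ∧ SEpic 𝒟 g := by
  haveI := rt.shift_additive
  rw [← hmu] at hZ
  rcases hZ with hZD | ⟨D, Y, f, g, h, h1, h2, h3, h4, h5⟩
  · have h0 : IsZero (T.obj (0 : C)) := by
      rw [IsZero.iff_id_eq_zero, ← T.map_id, Limits.id_zero, Functor.map_zero]
    have hT0 : T.obj (0 : C) ∈ 𝒵 := by
      refine hsub𝒵.2.2 (0 : T.obj (0 : C) ⟶ Z) (0 : Z ⟶ T.obj (0 : C)) ?_ (h𝒟𝒵 hZD)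
      rw [zero_comp]
      exact (h0.eq_of_src _ _)
    refine ⟨Z, T.obj 0, 𝟙 Z, 0, 0, idTriangle rt Z, hZD, hT0, ?_, ?_⟩
    · intro D' hD' u
      exact ⟨u, Category.id_comp u⟩
    · intro D' hD' u
      exact ⟨0, h0.eq_of_tgt _ _⟩
  · exact ⟨D, Y, f, g, h, h1, h2, h3, h4, h5⟩

/-- The cone of a `𝒟`-monic map from an object of `𝒵` into an object of `𝒟`
lies in `𝒵`. -/
private lemma coneIntoD (𝒟 𝒵 : Set C)
    (hsub𝒟 : IsSubcat 𝒟) (hsub𝒵 : IsSubcat 𝒵) (h𝒟𝒵 : 𝒟 ⊆ 𝒵)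
    (hext : ExtClosed rt 𝒵) (hmu : muSet rt 𝒵 𝒟 = 𝒵)
    {M Dt W : C} {ν : M ⟶ Dt} {g' : Dt ⟶ W} {h' : W ⟶ T.obj M}
    (hM : M ∈ 𝒵) (hDt : Dt ∈ 𝒟) (hν : SMonic 𝒟 ν)
    (htW : (⟨M, Dt, W, ν, g', h'⟩ : RightTriangle C T) ∈ rt.dist) :
    W ∈ 𝒵 := by
  haveI := rt.shift_additive
  obtain ⟨DM, YM, fM, gM, hM', htM, hDM, hYM, hfM, hgM⟩ :=
    getData rt 𝒟 𝒵 hsub𝒵 h𝒟𝒵 hmu hM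
  obtain ⟨σ, hσ⟩ := hfM Dt hDt ν
  obtain ⟨τ, hτ⟩ := hν DM hDM fM
  have hE : (DM ⊞ Dt) ∈ 𝒟 := hsub𝒟.2.1 hDM hDt
  obtain ⟨Q, gQ, hQ, htQ⟩ := rt.tr2 (biprod.lift fM ν)
  -- first octahedron : (fM, ν) = fM ≫ (𝟙, σ)
  obtain ⟨K₁, gK₁, hK₁, htK₁⟩ := rt.tr2 (biprod.lift (𝟙 DM) σ)
  have htQ' : (⟨M, DM ⊞ Dt, Q, fM ≫ biprod.lift (𝟙 DM) σ, gQ, hQ⟩ :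
      RightTriangle C T) ∈ rt.dist := by
    have he : fM ≫ biprod.lift (𝟙 DM) σ = biprod.lift fM ν := by
      apply biprod.hom_ext <;> simp [hσ]
    rw [he]; exact htQ
  obtain ⟨lI, iI, -, -, -, -, htTI⟩ :=
    rt.tr5 fM gM hM' (biprod.lift (𝟙 DM) σ) gK₁ hK₁ gQ hQ htM htK₁ htQ'
  -- the cone of the split mono `(𝟙, σ)` is isomorphic to `Dt`
  have hjπ : biprod.lift (𝟙 DM) σ ≫ (biprod.snd - biprod.fst ≫ σ) = 0 := by
    simp
  obtain ⟨c₁, hc₁, -⟩ := rt.tr4 _ htK₁ _ (rt.tr1 Dt) 0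
    (biprod.snd - biprod.fst ≫ σ) (by simp)
  rw [Category.comp_id] at hc₁
  have hc₂c₁ : (biprod.inr ≫ gK₁) ≫ c₁ = 𝟙 Dt := by
    rw [Category.assoc, hc₁]; simp
  have hjg : biprod.lift (𝟙 DM) σ ≫ gK₁ = 0 := compZero rt htK₁
  have hsplit : (biprod.snd - biprod.fst ≫ σ) ≫ biprod.inr =
      𝟙 (DM ⊞ Dt) - biprod.fst ≫ biprod.lift (𝟙 DM) σ := by
    apply biprod.hom_ext <;> simp
  have hgKe : gK₁ ≫ (c₁ ≫ (biprod.inr ≫ gK₁)) = gK₁ := by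
    calc gK₁ ≫ (c₁ ≫ (biprod.inr ≫ gK₁))
        = ((gK₁ ≫ c₁) ≫ biprod.inr) ≫ gK₁ := by simp only [Category.assoc]
      _ = ((biprod.snd - biprod.fst ≫ σ) ≫ biprod.inr) ≫ gK₁ := by rw [hc₁]
      _ = (𝟙 (DM ⊞ Dt) - biprod.fst ≫ biprod.lift (𝟙 DM) σ) ≫ gK₁ := by rw [hsplit]
      _ = gK₁ := by
          rw [Preadditive.sub_comp, Category.id_comp, Category.assoc, hjg,
            comp_zero, sub_zero]
  have hK₁0 : hK₁ = 0 := by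
    have h1 : hK₁ ≫ T.map (biprod.lift (𝟙 DM) σ) = 0 := by
      have h2 := compZero rt (rt.tr3 _ (rt.tr3 _ htK₁))
      simp only [Preadditive.comp_neg, neg_eq_zero] at h2
      exact h2
    calc hK₁ = hK₁ ≫ T.map (biprod.lift (𝟙 DM) σ) ≫ T.map biprod.fst := by
          rw [← T.map_comp]
          simp
      _ = 0 := by rw [← Category.assoc, h1, zero_comp]
  have he₁ : c₁ ≫ (biprod.inr ≫ gK₁) = 𝟙 K₁ := by
    have hd : gK₁ ≫ (c₁ ≫ (biprod.inr ≫ gK₁) - 𝟙 K₁) = 0 := by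
      rw [Preadditive.comp_sub, hgKe, Category.comp_id, sub_self]
    obtain ⟨w, hw⟩ := bexact rt (rt.tr3 _ htK₁) _ hd
    have : c₁ ≫ (biprod.inr ≫ gK₁) - 𝟙 K₁ = 0 := by
      rw [← hw, hK₁0, zero_comp]
    rwa [sub_eq_zero] at this
  have hK₁Z : K₁ ∈ 𝒵 :=
    hsub𝒵.1 (Iso.mk (biprod.inr ≫ gK₁) c₁ hc₂c₁ he₁) (h𝒟𝒵 hDt)
  have hQZ : Q ∈ 𝒵 := hext _ htTI hYM hK₁Z
  -- second octahedron : (fM, ν) = ν ≫ (τ, 𝟙)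
  obtain ⟨K₂, gK₂, hK₂, htK₂⟩ := rt.tr2 (biprod.lift τ (𝟙 Dt))
  have htQ'' : (⟨M, DM ⊞ Dt, Q, ν ≫ biprod.lift τ (𝟙 Dt), gQ, hQ⟩ :
      RightTriangle C T) ∈ rt.dist := by
    have he : ν ≫ biprod.lift τ (𝟙 Dt) = biprod.lift fM ν := by
      apply biprod.hom_ext <;> simp [hτ]
    rw [he]; exact htQ
  obtain ⟨lII, iII, hrel1, hrel2, -, -, -⟩ :=
    rt.tr5 ν g' h' (biprod.lift τ (𝟙 Dt)) gK₂ hK₂ gQ hQ htW htK₂ htQ''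
  -- retraction of `lII : W ⟶ Q`
  obtain ⟨ρ, hρ1, hρ2⟩ := rt.tr4 _ htQ _ htW (𝟙 M) biprod.snd (by simp)
  have hρ2' : ρ ≫ h' = hQ := by
    rw [T.map_id, Category.comp_id] at hρ2; exact hρ2.symm
  have hge : g' ≫ (lII ≫ ρ) = g' := by
    rw [← Category.assoc, hrel1, Category.assoc, hρ1, ← Category.assoc]; simp
  have heh : (lII ≫ ρ) ≫ h' = h' := by
    rw [Category.assoc, hρ2', hrel2]
  have hgd : g' ≫ (lII ≫ ρ - 𝟙 W) = 0 := by
    rw [Preadditive.comp_sub, hge, Category.comp_id, sub_self]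
  obtain ⟨w₀, hw₀⟩ := bexact rt (rt.tr3 _ htW) _ hgd
  have hdh : (lII ≫ ρ - 𝟙 W) ≫ h' = 0 := by
    rw [Preadditive.sub_comp, heh, Category.id_comp, sub_self]
  have hdd : (lII ≫ ρ - 𝟙 W) ≫ (lII ≫ ρ - 𝟙 W) = 0 := by
    nth_rewrite 2 [← hw₀]
    rw [← Category.assoc, hdh, zero_comp]
  have hed : (lII ≫ ρ) ≫ (lII ≫ ρ - 𝟙 W) = lII ≫ ρ - 𝟙 W := by
    have h := hdd
    rw [Preadditive.sub_comp, Category.id_comp, sub_eq_zero] at h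
    exact h
  have hret : lII ≫ (ρ ≫ (𝟙 W - (lII ≫ ρ - 𝟙 W))) = 𝟙 W := by
    rw [← Category.assoc, Preadditive.comp_sub, Category.comp_id, hed, sub_sub_cancel]
  exact hsub𝒵.2.2 lII _ hret hQZ

end AuxLemmas

/-- Corollary 3.10: under the hypotheses making `𝒵/𝒟` right triangulated, if
`μ : M ⟶ N` is `𝒟`-monic with `M, N ∈ 𝒵` and `M ⟶μ N ⟶γ P ⟶φ TM` is a right
triangle in `C`, then `P ∈ 𝒵`. -/
theorem cone_mem_of_dMonic {C : Type u} [Category.{v} C] [Preadditive C]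
    [HasZeroObject C] [HasFiniteBiproducts C] {T : C ⥤ C} (rt : RightTriangulated T)
    (h210 : Assumption210 rt)
    (𝒟 𝒵 : Set C) (hsub𝒟 : IsSubcat 𝒟) (hsub𝒵 : IsSubcat 𝒵) (h𝒟𝒵 : 𝒟 ⊆ 𝒵)
    (hfte : FactorThroughEpic T 𝒟) (hext : ExtClosed rt 𝒵)
    (hmu : muSet rt 𝒵 𝒟 = 𝒵)
    {M N P : C} (hM : M ∈ 𝒵) (hN : N ∈ 𝒵)
    (μ : M ⟶ N) (γ : N ⟶ P) (φ : P ⟶ T.obj M)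
    (hμ : SMonic 𝒟 μ)
    (ht : (⟨M, N, P, μ, γ, φ⟩ : RightTriangle C T) ∈ rt.dist) :
    P ∈ 𝒵 := by
  haveI := rt.shift_additive
  -- data for N
  obtain ⟨DN, YN, fN, gN, hN, htN, hDN, hYN, hfN, hgN⟩ :=
    getData rt 𝒟 𝒵 hsub𝒵 h𝒟𝒵 hmu hN
  -- the composite ν = μ ≫ fN is 𝒟-monic
  have hνmono : SMonic 𝒟 (μ ≫ fN) := by
    intro D' hD' u
    obtain ⟨v, hv⟩ := hμ D' hD' u
    obtain ⟨v₂, hv₂⟩ := hfN D' hD' v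
    exact ⟨v₂, by rw [Category.assoc, hv₂, hv]⟩
  obtain ⟨W, g', h', htW⟩ := rt.tr2 (μ ≫ fN)
  have hWZ : W ∈ 𝒵 :=
    coneIntoD rt 𝒟 𝒵 hsub𝒟 hsub𝒵 h𝒟𝒵 hext hmu hM hDN hνmono htW
  -- main octahedron
  obtain ⟨l, i, ho1, ho2, ho3, ho4, ho5⟩ := rt.tr5 μ γ φ fN gN hN g' h' ht htN htW
  -- `l : P ⟶ W` is 𝒟-monic
  have hlmono : SMonic 𝒟 l := by
    intro D' hD' u
    obtain ⟨v, hv⟩ := hfN D' hD' (γ ≫ u)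
    have hνv : (μ ≫ fN) ≫ v = 0 := by
      rw [Category.assoc, hv, ← Category.assoc, compZero rt ht, zero_comp]
    obtain ⟨y, hy⟩ := bexact rt htW v hνv
    have hγ0 : γ ≫ (u - l ≫ y) = 0 := by
      rw [Preadditive.comp_sub, ← Category.assoc, ho1, Category.assoc, hy, hv, sub_self]
    obtain ⟨w₁, hw₁⟩ := bexact rt (rt.tr3 _ ht) _ hγ0
    refine ⟨y + h' ≫ w₁, ?_⟩
    rw [Preadditive.comp_add, ← Category.assoc, ho2, hw₁]
    abel
  -- data for W
  obtain ⟨DW, YW, fW, gW, hW, htW', hDW, hYW, hfW, hgW⟩ :=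
    getData rt 𝒟 𝒵 hsub𝒵 h𝒟𝒵 hmu hWZ
  -- triangle on α := l ≫ fW
  obtain ⟨Cα, β, δ, htα⟩ := rt.tr2 (l ≫ fW)
  obtain ⟨lα, iα, hp1, hp2, hp3, hp4, hp5⟩ :=
    rt.tr5 l i (hN ≫ T.map γ) fW gW hW β δ ho5 htW' htα
  have hCαZ : Cα ∈ 𝒵 := hext _ hp5 hYN hYW
  -- α is 𝒟-monic
  have hαmono : SMonic 𝒟 (l ≫ fW) := by
    intro D' hD' u
    obtain ⟨v, hv⟩ := hlmono D' hD' u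
    obtain ⟨v₂, hv₂⟩ := hfW D' hD' v
    exact ⟨v₂, by rw [Category.assoc, hv₂, hv]⟩
  -- β is a right 𝒟-approximation
  have hβepi : SEpic 𝒟 β := by
    intro D' hD' u
    obtain ⟨v₁, hv₁⟩ := hgW D' hD' (u ≫ iα)
    have hu' : (u - v₁ ≫ β) ≫ iα = 0 := by
      rw [Preadditive.sub_comp, Category.assoc, hp3, hv₁, sub_self]
    obtain ⟨x, hx⟩ := ceD rt 𝒟 h210 hfte hp5 hD' (u - v₁ ≫ β) hu'
    obtain ⟨x₁, hx₁⟩ := hgN D' hD' x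
    refine ⟨v₁ + x₁ ≫ g' ≫ fW, ?_⟩
    have hfin : (x₁ ≫ g' ≫ fW) ≫ β = u - v₁ ≫ β := by
      calc (x₁ ≫ g' ≫ fW) ≫ β = x₁ ≫ g' ≫ (fW ≫ β) := by
            simp only [Category.assoc]
      _ = x₁ ≫ g' ≫ (i ≫ lα) := by rw [hp1]
      _ = x₁ ≫ (g' ≫ i) ≫ lα := by simp only [Category.assoc]
      _ = (x₁ ≫ gN) ≫ lα := by rw [ho3, Category.assoc]
      _ = x ≫ lα := by rw [hx₁]
      _ = u - v₁ ≫ β := hx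
    rw [Preadditive.add_comp, hfin]
    abel
  -- conclude
  have hmem : P ∈ muSet rt 𝒵 𝒟 :=
    Or.inr ⟨DW, Cα, l ≫ fW, β, δ, htα, hDW, hCαZ, hαmono, hβepi⟩
  rwa [hmu] at hmem
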